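/- Let t be a prime number and a ≥ 2 an integer, and let p be a primitive prime divisor of t^a − 1, i.e. a prime dividing t^a − 1 that does not divide t^b − 1 for any integer 1 ≤ b < a. If X is a subgroup of order p of G = GL_a(F_t), then the centralizer C_G(X) is a cyclic group of order t^a − 1. -/

import Mathlib

open scoped MatrixGroups

/-- The set of irreducible (complex) character degrees of the group `G`. -/
def charDegrees (G : Type) [Group G] : Set ℕ :=
  {n | ∃ V : FDRep ℂ G, CategoryTheory.Simple V ∧ Module.finrank ℂ V = n}

/-- The vertex set of the character degree graph of `G`: the primes dividing some
irreducible character degree. -/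
def degreeVertexSet (G : Type) [Group G] : Set ℕ :=
  {p | p.Prime ∧ ∃ n ∈ charDegrees G, p ∣ n}

/-- The character degree graph of `G`, as a simple graph on `ℕ`: two distinct primes
are adjacent iff their product divides some irreducible character degree. -/
def degreeGraph (G : Type) [Group G] : SimpleGraph ℕ where
  Adj p q := p ≠ q ∧ p.Prime ∧ q.Prime ∧ ∃ n ∈ charDegrees G, p * q ∣ n
  symm := by
    constructor
    rintro p q ⟨h1, h2, h3, n, hn, hd⟩
    exact ⟨h1.symm, h3, h2, n, hn, by rwa [mul_comm]⟩
  loopless := ⟨fun p h => h.1 rfl⟩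

/-- The number of connected components of the subgraph of `Γ` induced on `s`. -/
noncomputable def numComponents {α : Type*} (Γ : SimpleGraph α) (s : Set α) : ℕ :=
  Nat.card (SimpleGraph.induce s Γ).ConnectedComponent

/-- `p` is a cut-vertex of the graph `Γ` with vertex set `s` if `p ∈ s` and removing `p`
increases the number of connected components. -/
def IsCutVertex {α : Type*} (Γ : SimpleGraph α) (s : Set α) (p : α) : Prop :=
  p ∈ s ∧ numComponents Γ s < numComponents Γ (s \ {p})

/-- The character degree graph of `G` is connected. -/
def degConnected (G : Type) [Group G] : Prop :=
  (SimpleGraph.induce (degreeVertexSet G) (degreeGraph G)).Connected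

/-- `p` is a cut-vertex of the character degree graph of `G`. -/
def degCutVertex (G : Type) [Group G] (p : ℕ) : Prop :=
  IsCutVertex (degreeGraph G) (degreeVertexSet G) p

/-- The solvable radical: the largest solvable normal subgroup (for finite groups). -/
def solvableRadical (G : Type*) [Group G] : Subgroup G :=
  sSup {H : Subgroup G | H.Normal ∧ IsSolvable ↥H}

instance solvableRadical_normal (G : Type*) [Group G] : (solvableRadical G).Normal := by
  constructor
  intro x hx g
  have h : solvableRadical G ≤
      Subgroup.comap (MulAut.conj g).toMonoidHom (solvableRadical G) := by
    apply sSup_le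
    intro H hH y hy
    rw [Subgroup.mem_comap]
    exact le_sSup hH (hH.1.conj_mem y hy g)
  exact h hx

/-- The solvable residual: the last term of the derived series (for finite groups,
equivalently the intersection of all terms of the derived series). -/
def solvableResidual (G : Type*) [Group G] : Subgroup G :=
  ⨅ n, derivedSeries G n

instance solvableResidual_normal (G : Type*) [Group G] : (solvableResidual G).Normal := by
  constructor
  intro x hx g
  rw [solvableResidual, Subgroup.mem_iInf] at hx ⊢
  intro n
  exact (derivedSeries_normal G n).conj_mem x (hx n) g

open Polynomial Matrix

lemma ppd_deg_ge {t a p : ℕ} [Fact t.Prime] (hp : p.Prime)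
    (hprim : ∀ b : ℕ, 1 ≤ b → b < a → ¬ p ∣ t ^ b - 1)
    {f : (ZMod t)[X]} (hf : Irreducible f) (hfm : f.Monic)
    (hdvd : f ∣ X ^ p - 1) (hne : ¬ (f ∣ X - 1)) :
    a ≤ f.natDegree := by
  haveI : Fact (Irreducible f) := ⟨hf⟩
  set K := AdjoinRoot f
  have hf0 : f ≠ 0 := hf.ne_zero
  set r : K := AdjoinRoot.root f
  have hrp : r ^ p = 1 := by
    have : AdjoinRoot.mk f (X ^ p - 1) = 0 := by
      rw [AdjoinRoot.mk_eq_zero]; exact hdvd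
    have := this
    simpa [map_sub, map_pow, AdjoinRoot.mk_X, sub_eq_zero] using this
  have hr1 : r ≠ 1 := by
    intro h
    apply hne
    rw [← AdjoinRoot.mk_eq_zero (f := f)]
    simpa [map_sub, AdjoinRoot.mk_X, sub_eq_zero] using h
  have hr0 : r ≠ 0 := by
    intro h; rw [h] at hrp; simp [zero_pow hp.ne_zero] at hrp
  -- order of r is p
  have hord : orderOf r = p := by
    have h1 : orderOf r ∣ p := orderOf_dvd_of_pow_eq_one hrp
    rcases (Nat.Prime.eq_one_or_self_of_dvd hp _ h1) with h | h
    · exact absurd (orderOf_eq_one_iff.mp h) hr1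
    · exact h
  -- K is finite of card t ^ d
  have hd0 : 0 < f.natDegree := hf.natDegree_pos
  have hcard : Nat.card K = t ^ f.natDegree := by
    have b := AdjoinRoot.powerBasisAux' hfm
    rw [Nat.card_congr b.equivFun.toEquiv]
    simp [Nat.card_fun, Nat.card_eq_fintype_card, ZMod.card]
  haveI : Finite K := by
    have b := AdjoinRoot.powerBasisAux' hfm
    exact Finite.of_equiv _ b.equivFun.toEquiv.symm
  -- p divides card Kˣ = t ^ d - 1
  have hu : IsUnit r := isUnit_iff_ne_zero.mpr hr0
  obtain ⟨u, hur⟩ := hu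
  have hordu : orderOf u = p := by rw [← hord, ← hur, orderOf_units]
  have hpdvd : p ∣ Nat.card Kˣ := hordu ▸ orderOf_dvd_natCard u
  have := Fintype.ofFinite K
  have hcardu : Nat.card Kˣ = t ^ f.natDegree - 1 := by
    rw [Nat.card_eq_fintype_card, Fintype.card_units, ← Nat.card_eq_fintype_card, hcard]
  rw [hcardu] at hpdvd
  by_contra hlt
  exact hprim f.natDegree hd0 (lt_of_not_ge hlt) hpdvd

lemma monic_dvd_eq {F : Type*} [Field F] {f g : F[X]} (hf : f.Monic) (hg : g.Monic)
    (hdvd : f ∣ g) (hdeg : g.natDegree ≤ f.natDegree) : f = g := by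
  obtain ⟨c, rfl⟩ := hdvd
  have hc0 : c ≠ 0 := by rintro rfl; simp at hg
  have hf0 : f ≠ 0 := hf.ne_zero
  have hdc : c.natDegree = 0 := by
    have := natDegree_mul hf0 hc0
    omega
  have hc : c = C (c.coeff 0) := Polynomial.eq_C_of_natDegree_eq_zero hdc
  have hlc : (f * c).leadingCoeff = 1 := hg
  rw [leadingCoeff_mul, hf.leadingCoeff, one_mul] at hlc
  rw [hc, leadingCoeff_C] at hlc
  rw [hc, hlc, _root_.map_one, mul_one]

lemma not_isUnit_X_sub_one {F : Type*} [Field F] : ¬ IsUnit (X - 1 : F[X]) := by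
  intro h
  have := natDegree_eq_zero_of_isUnit h
  rw [show (X - 1 : F[X]) = X - C 1 by simp, natDegree_X_sub_C] at this
  omega

lemma dvd_X_sub_one_eq {F : Type*} [Field F] {f : F[X]} (hf : Irreducible f) (hfm : f.Monic)
    (h : f ∣ X - 1) : f = X - 1 := by
  apply monic_dvd_eq hfm (by simpa using monic_X_sub_C (1 : F)) h
  have h1 : (X - 1 : F[X]).natDegree = 1 := by
    rw [show (X - 1 : F[X]) = X - C 1 by simp, natDegree_X_sub_C]
  rw [h1]
  exact hf.natDegree_pos

lemma minpoly_irred {t a p : ℕ} [Fact t.Prime] (hp : p.Prime) (ha : 2 ≤ a) (hpt : p ≠ t)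
    (hprim : ∀ b : ℕ, 1 ≤ b → b < a → ¬ p ∣ t ^ b - 1)
    {M : Matrix (Fin a) (Fin a) (ZMod t)} (hMp : M ^ p = 1) (hM1 : M ≠ 1) :
    Irreducible (minpoly (ZMod t) M) ∧ (minpoly (ZMod t) M).natDegree = a := by
  haveI : Nonempty (Fin a) := ⟨⟨0, by omega⟩⟩
  have hint : IsIntegral (ZMod t) M := .of_finite (ZMod t) M
  set m := minpoly (ZMod t) M with hm
  have hmon : m.Monic := minpoly.monic hint
  have hdvdXp : m ∣ X ^ p - 1 := by
    apply minpoly.dvd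
    simp [hMp]
  have hdegm : m.natDegree ≤ a := by
    have h1 : m ∣ M.charpoly := Matrix.minpoly_dvd_charpoly M
    calc m.natDegree ≤ M.charpoly.natDegree :=
          natDegree_le_of_dvd h1 (Matrix.charpoly_monic M).ne_zero
      _ = a := by simp
  have hsq : Squarefree (X ^ p - 1 : (ZMod t)[X]) := by
    have hsep : Separable (X ^ p - C (1 : ZMod t)) := by
      apply separable_X_pow_sub_C
      · rw [Ne, ZMod.natCast_eq_zero_iff]
        exact fun h => hpt (((Nat.prime_dvd_prime_iff_eq Fact.out hp).mp h)).symm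
      · exact one_ne_zero
    simpa using hsep.squarefree
  have hmsq : Squarefree m := hsq.squarefree_of_dvd hdvdXp
  have hmd0 : 0 < m.natDegree := minpoly.natDegree_pos hint
  obtain ⟨f, hfmon, hfirr, hfdvd⟩ := (m : (ZMod t)[X]).exists_monic_irreducible_factor
    (by intro h; exact absurd (natDegree_eq_zero_of_isUnit h) (by omega))
  by_cases hfx : f ∣ X - 1
  · have hfeq : f = X - 1 := dvd_X_sub_one_eq hfirr hfmon hfx
    exfalso
    have hmeq : m = X - 1 := by
      by_contra hne
      obtain ⟨m', hm'⟩ := hfdvd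
      have hm'0 : m' ≠ 0 := by rintro rfl; rw [mul_zero] at hm'; exact hmon.ne_zero hm'
      have hm'deg : 0 < m'.natDegree := by
        rcases Nat.eq_zero_or_pos m'.natDegree with h | h
        · exfalso
          apply hne
          rw [← dvd_X_sub_one_eq hfirr hfmon hfx]
          refine (monic_dvd_eq hfmon hmon ⟨m', hm'⟩ ?_).symm
          have hnm := natDegree_mul hfmon.ne_zero hm'0
          rw [← hm'] at hnm
          omega
        · exact h
      obtain ⟨g, hgmon, hgirr, hgdvd⟩ := m'.exists_monic_irreducible_factor
        (by intro h; exact absurd (natDegree_eq_zero_of_isUnit h) (by omega))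
      have hgx : ¬ (g ∣ X - 1) := by
        intro h
        have hgeq : g = X - 1 := dvd_X_sub_one_eq hgirr hgmon h
        have hdd : (X - 1) * (X - 1) ∣ m := by
          rw [hm', hfeq]
          exact mul_dvd_mul_left _ (hgeq ▸ hgdvd)
        exact not_isUnit_X_sub_one (hmsq _ hdd)
      have hga : a ≤ g.natDegree :=
        ppd_deg_ge hp hprim hgirr hgmon
          ((hgdvd.trans ⟨f, by rw [hm', mul_comm]⟩).trans hdvdXp) hgx
      have hsum : m.natDegree = f.natDegree + m'.natDegree := by
        rw [hm']; exact natDegree_mul hfmon.ne_zero hm'0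
      have hgm' : g.natDegree ≤ m'.natDegree := natDegree_le_of_dvd hgdvd hm'0
      have hf1 : f.natDegree = 1 := by
        rw [hfeq, show (X - 1 : (ZMod t)[X]) = X - C 1 by simp, natDegree_X_sub_C]
      omega
    apply hM1
    have h := minpoly.aeval (ZMod t) M
    rw [← hm, hmeq] at h
    simpa [sub_eq_zero] using h
  · have hfa : a ≤ f.natDegree := ppd_deg_ge hp hprim hfirr hfmon (hfdvd.trans hdvdXp) hfx
    have hfm : f = m := monic_dvd_eq hfmon hmon hfdvd (by omega)
    have hdeg : m.natDegree = a := by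
      have := natDegree_le_of_dvd hfdvd hmon.ne_zero
      omega
    exact ⟨hfm ▸ hfirr, hdeg⟩

section EAlg
variable {t a : ℕ} [Fact t.Prime]


section E
variable (M : Matrix (Fin a) (Fin a) (ZMod t))

lemma mem_E_iff {N : Matrix (Fin a) (Fin a) (ZMod t)} :
    N ∈ Algebra.adjoin (ZMod t) {M} ↔ ∃ q : (ZMod t)[X], aeval M q = N := by
  rw [Algebra.adjoin_singleton_eq_range_aeval]
  exact ⟨fun ⟨q, hq⟩ => ⟨q, hq⟩, fun ⟨q, hq⟩ => ⟨q, hq⟩⟩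

lemma E_comm {x y : Matrix (Fin a) (Fin a) (ZMod t)} (hx : x ∈ Algebra.adjoin (ZMod t) {M})
    (hy : y ∈ Algebra.adjoin (ZMod t) {M}) : x * y = y * x := by
  obtain ⟨q, rfl⟩ := (mem_E_iff M).mp hx
  obtain ⟨r, rfl⟩ := (mem_E_iff M).mp hy
  rw [← _root_.map_mul, ← _root_.map_mul, mul_comm]

lemma E_inv (hirr : Irreducible (minpoly (ZMod t) M))
    {N : Matrix (Fin a) (Fin a) (ZMod t)} (hN : N ∈ Algebra.adjoin (ZMod t) {M}) (hN0 : N ≠ 0) :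
    ∃ N' ∈ Algebra.adjoin (ZMod t) {M}, N * N' = 1 ∧ N' * N = 1 := by
  obtain ⟨q, rfl⟩ := (mem_E_iff M).mp hN
  have hndvd : ¬ (minpoly (ZMod t) M ∣ q) := by
    intro h
    apply hN0
    obtain ⟨c, rfl⟩ := h
    rw [_root_.map_mul, minpoly.aeval, zero_mul]
  have hcop : IsCoprime (minpoly (ZMod t) M) q := hirr.coprime_iff_not_dvd.mpr hndvd
  obtain ⟨u, v, huv⟩ := hcop
  have key : aeval M q * aeval M v = 1 := by
    have h2 := congrArg (aeval M) huv
    rw [_root_.map_add, _root_.map_mul, _root_.map_mul, minpoly.aeval, mul_zero, zero_add, _root_.map_one] at h2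
    rw [← _root_.map_mul, mul_comm q v, _root_.map_mul]
    exact h2
  refine ⟨aeval M v, (mem_E_iff M).mpr ⟨v, rfl⟩, key, ?_⟩
  rw [← _root_.map_mul, mul_comm v q, _root_.map_mul, key]

lemma E_card (ha : 1 ≤ a) (hdeg : (minpoly (ZMod t) M).natDegree = a) :
    Nat.card (Algebra.adjoin (ZMod t) {M}) = t ^ a := by
  haveI : Nonempty (Fin a) := ⟨⟨0, by omega⟩⟩
  have hint : IsIntegral (ZMod t) M := .of_finite (ZMod t) M
  have hmon : (minpoly (ZMod t) M).Monic := minpoly.monic hint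
  have hdegm : (minpoly (ZMod t) M).degree = (a : ℕ) := by
    rw [degree_eq_natDegree hmon.ne_zero, hdeg]
  set φ : Polynomial.degreeLT (ZMod t) a → Algebra.adjoin (ZMod t) {M} :=
    fun q => ⟨aeval M q.1, (mem_E_iff M).mpr ⟨q.1, rfl⟩⟩ with hφ
  have hbij : Function.Bijective φ := by
    constructor
    · rintro ⟨q₁, h₁⟩ ⟨q₂, h₂⟩ h
      have h0 : aeval M (q₁ - q₂) = 0 := by
        rw [_root_.map_sub, sub_eq_zero]
        exact congrArg Subtype.val h
      by_contra hne
      have hsub : q₁ - q₂ ≠ 0 := fun hs => hne (by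
        ext : 1
        exact sub_eq_zero.mp hs)
      have := minpoly.degree_le_of_ne_zero (ZMod t) M hsub h0
      rw [hdegm] at this
      rw [Polynomial.mem_degreeLT] at h₁ h₂
      have hlt : (q₁ - q₂).degree < (a : ℕ) := lt_of_le_of_lt (degree_sub_le q₁ q₂) (max_lt h₁ h₂)
      exact absurd (lt_of_le_of_lt this hlt) (lt_irrefl _)
    · rintro ⟨N, hN⟩
      obtain ⟨q, rfl⟩ := (mem_E_iff M).mp hN
      refine ⟨⟨q %ₘ minpoly (ZMod t) M, ?_⟩, ?_⟩
      · rw [Polynomial.mem_degreeLT, ← hdegm]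
        exact degree_modByMonic_lt q hmon
      · ext : 1
        show aeval M (q %ₘ minpoly (ZMod t) M) = aeval M q
        conv_rhs => rw [← modByMonic_add_div q (minpoly (ZMod t) M)]
        rw [_root_.map_add, _root_.map_mul, minpoly.aeval, zero_mul, add_zero]
  rw [← Nat.card_congr (Equiv.ofBijective φ hbij)]
  rw [Nat.card_congr (Polynomial.degreeLTEquiv (ZMod t) a).toEquiv]
  simp [Nat.card_fun, Nat.card_eq_fintype_card, ZMod.card]
end E

lemma E_commutant (M : Matrix (Fin a) (Fin a) (ZMod t)) (ha : 1 ≤ a)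
    (hirr : Irreducible (minpoly (ZMod t) M))
    (hdeg : (minpoly (ZMod t) M).natDegree = a)
    {N : Matrix (Fin a) (Fin a) (ZMod t)} (hNM : N * M = M * N) :
    N ∈ Algebra.adjoin (ZMod t) {M} := by
  haveI : Nonempty (Fin a) := ⟨⟨0, by omega⟩⟩
  set v₀ : Fin a → ZMod t := Pi.single ⟨0, by omega⟩ 1 with hv₀
  have hv₀0 : v₀ ≠ 0 := by
    intro h
    have := congrFun h ⟨0, by omega⟩
    simp [hv₀, Pi.single_eq_same] at this
  set ψ : ↥(Algebra.adjoin (ZMod t) {M}) → (Fin a → ZMod t) := fun e => e.1 *ᵥ v₀ with hψ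
  have hinj : Function.Injective ψ := by
    rintro e₁ e₂ h
    by_contra hne
    have hsub : (e₁ : Matrix (Fin a) (Fin a) (ZMod t)) - (e₂ : Matrix (Fin a) (Fin a) (ZMod t)) ≠ 0 :=
      sub_ne_zero.mpr (fun hs => hne (Subtype.ext hs))
    have hmem : (e₁ : Matrix (Fin a) (Fin a) (ZMod t)) - (e₂ : Matrix (Fin a) (Fin a) (ZMod t)) ∈ Algebra.adjoin (ZMod t) {M} :=
      sub_mem e₁.2 e₂.2
    obtain ⟨N', hN', h1, h2⟩ := E_inv M hirr hmem hsub
    have hz : ((e₁ : Matrix (Fin a) (Fin a) (ZMod t)) - (e₂ : Matrix (Fin a) (Fin a) (ZMod t))) *ᵥ v₀ = 0 := by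
      rw [Matrix.sub_mulVec]
      show ψ e₁ - ψ e₂ = 0
      rw [h, sub_self]
    apply hv₀0
    have h3 := congrArg (fun w => N' *ᵥ w) hz
    simpa [Matrix.mulVec_mulVec, h2, Matrix.one_mulVec] using h3
  haveI : Fintype (Algebra.adjoin (ZMod t) {M}) := Fintype.ofFinite _
  have hcards : Fintype.card (Algebra.adjoin (ZMod t) {M}) = Fintype.card (Fin a → ZMod t) := by
    rw [← Nat.card_eq_fintype_card, ← Nat.card_eq_fintype_card, E_card M ha hdeg]
    simp [Nat.card_fun, Nat.card_eq_fintype_card, ZMod.card]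
  have hsurj : Function.Surjective ψ :=
    ((Fintype.bijective_iff_injective_and_card ψ).mpr ⟨hinj, hcards⟩).2
  obtain ⟨e₀, he₀⟩ := hsurj (N *ᵥ v₀)
  have hle : Algebra.adjoin (ZMod t) {M} ≤ Subalgebra.centralizer (ZMod t) {N} := by
    apply Algebra.adjoin_le
    intro x hx
    rw [Set.mem_singleton_iff] at hx
    subst hx
    rw [SetLike.mem_coe, Subalgebra.mem_centralizer_iff]
    intro g hg
    rw [Set.mem_singleton_iff] at hg
    subst hg
    exact hNM
  have hNe : ∀ v, N *ᵥ v = (e₀ : Matrix (Fin a) (Fin a) (ZMod t)) *ᵥ v := by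
    intro v
    obtain ⟨e, he⟩ := hsurj v
    have hcomm : N * (e : Matrix (Fin a) (Fin a) (ZMod t)) = (e : Matrix _ _ _) * N := by
      have h4 := hle e.2
      rw [Subalgebra.mem_centralizer_iff] at h4
      exact h4 N rfl
    calc N *ᵥ v = N *ᵥ ((e : Matrix (Fin a) (Fin a) (ZMod t)) *ᵥ v₀) := by rw [← he]
      _ = (N * (e : Matrix (Fin a) (Fin a) (ZMod t))) *ᵥ v₀ := by rw [Matrix.mulVec_mulVec]
      _ = ((e : Matrix (Fin a) (Fin a) (ZMod t)) * N) *ᵥ v₀ := by rw [hcomm]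
      _ = (e : Matrix (Fin a) (Fin a) (ZMod t)) *ᵥ (N *ᵥ v₀) := by rw [Matrix.mulVec_mulVec]
      _ = (e : Matrix (Fin a) (Fin a) (ZMod t)) *ᵥ
            ((e₀ : Matrix (Fin a) (Fin a) (ZMod t)) *ᵥ v₀) := by rw [← he₀]
      _ = ((e : Matrix (Fin a) (Fin a) (ZMod t)) * (e₀ : Matrix (Fin a) (Fin a) (ZMod t))) *ᵥ v₀ := by rw [Matrix.mulVec_mulVec]
      _ = ((e₀ : Matrix (Fin a) (Fin a) (ZMod t)) * (e : Matrix (Fin a) (Fin a) (ZMod t))) *ᵥ v₀ := by rw [E_comm M e.2 e₀.2]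
      _ = (e₀ : Matrix (Fin a) (Fin a) (ZMod t)) *ᵥ
            ((e : Matrix (Fin a) (Fin a) (ZMod t)) *ᵥ v₀) := by rw [Matrix.mulVec_mulVec]
      _ = (e₀ : Matrix (Fin a) (Fin a) (ZMod t)) *ᵥ v := by rw [← he]
  have hNeq : N = (e₀ : Matrix (Fin a) (Fin a) (ZMod t)) := by
    ext i j
    have h5 := congrFun (hNe (Pi.single j 1)) i
    simpa [Matrix.mulVec_single] using h5
  rw [hNeq]
  exact e₀.2

end EAlg

/-- If `p` is a primitive prime divisor of `t^a - 1` and `X ≤ GL_a(F_t)` has order `p`,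
then `C_{GL_a(F_t)}(X)` is cyclic of order `t^a - 1`. -/
theorem centralizer_of_primitive_prime_divisor (t a p : ℕ) [Fact t.Prime] (ha : 2 ≤ a)
    (hp : p.Prime) (hdvd : p ∣ t ^ a - 1)
    (hprim : ∀ b : ℕ, 1 ≤ b → b < a → ¬ p ∣ t ^ b - 1)
    (X : Subgroup (Matrix.GeneralLinearGroup (Fin a) (ZMod t)))
    (hX : Nat.card X = p) :
    IsCyclic ↥(Subgroup.centralizer (X : Set (Matrix.GeneralLinearGroup (Fin a) (ZMod t)))) ∧
      Nat.card ↥(Subgroup.centralizer (X : Set (Matrix.GeneralLinearGroup (Fin a) (ZMod t)))) =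
        t ^ a - 1 := by
  haveI : Fact p.Prime := ⟨hp⟩
  haveI : Nonempty (Fin a) := ⟨⟨0, by omega⟩⟩
  have hpt : p ≠ t := by
    intro h
    have h1 : 1 ≤ t ^ a := Nat.one_le_pow _ _ (Fact.out (p := t.Prime)).pos
    have h2 : p ∣ t ^ a := h ▸ dvd_pow_self t (by omega : a ≠ 0)
    have h3 := Nat.dvd_sub h2 hdvd
    rw [Nat.sub_sub_self h1] at h3
    exact hp.one_lt.ne' (Nat.dvd_one.mp h3)
  -- find a generator
  haveI : Fintype ↥X := Fintype.ofFinite _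
  obtain ⟨g', hg'⟩ := exists_prime_orderOf_dvd_card (G := ↥X) p (by
    rw [← Nat.card_eq_fintype_card, hX])
  set g : Matrix.GeneralLinearGroup (Fin a) (ZMod t) := g'.1 with hg
  have horder : orderOf g = p := by
    rw [← hg']
    exact orderOf_injective X.subtype Subtype.coe_injective g'
  have hgX : g ∈ X := g'.2
  have hXle : X ≤ Subgroup.zpowers g := by
    have htop : Subgroup.zpowers g' = ⊤ := by
      apply Subgroup.eq_top_of_card_eq
      rw [Nat.card_zpowers, hg', hX]
    intro x hx
    have hmem : (⟨x, hx⟩ : ↥X) ∈ Subgroup.zpowers g' := htop ▸ Subgroup.mem_top _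
    obtain ⟨k, hk⟩ := hmem
    have hk' : g' ^ k = ⟨x, hx⟩ := hk
    refine ⟨k, ?_⟩
    show g ^ k = x
    have h6 : X.subtype (g' ^ k) = X.subtype ⟨x, hx⟩ := congrArg X.subtype hk'
    rw [map_zpow] at h6
    exact h6
  set M : Matrix (Fin a) (Fin a) (ZMod t) := (g : Matrix (Fin a) (Fin a) (ZMod t)) with hM
  have hMp : M ^ p = 1 := by
    have h := pow_orderOf_eq_one g
    rw [horder] at h
    rw [hM, ← Units.val_pow_eq_pow_val, h, Units.val_one]
  have hM1 : M ≠ 1 := by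
    intro h
    have : g = 1 := Units.ext h
    rw [this, orderOf_one] at horder
    exact hp.one_lt.ne' horder.symm
  obtain ⟨hirr, hdeg⟩ := minpoly_irred hp ha hpt hprim hMp hM1
  -- membership characterization
  have hmemZ : ∀ c : Matrix.GeneralLinearGroup (Fin a) (ZMod t),
      c ∈ Subgroup.centralizer (X : Set _) ↔
        (c : Matrix (Fin a) (Fin a) (ZMod t)) * M = M * (c : Matrix (Fin a) (Fin a) (ZMod t)) := by
    intro c
    rw [Subgroup.mem_centralizer_iff]
    constructor
    · intro h
      have h2 := h g hgX
      have h3 := congrArg Units.val h2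
      simp only [Units.val_mul] at h3
      rw [show ((g : Matrix.GeneralLinearGroup (Fin a) (ZMod t)) :
        Matrix (Fin a) (Fin a) (ZMod t)) = M from rfl] at h3
      exact h3.symm
    · intro h x hx
      obtain ⟨k, hk⟩ := hXle hx
      have hcg : Commute c g := Units.ext (by
        simp only [Units.val_mul]
        rw [show ((g : Matrix.GeneralLinearGroup (Fin a) (ZMod t)) :
          Matrix (Fin a) (Fin a) (ZMod t)) = M from rfl]
        exact h)
      have h4 := hcg.zpow_right k
      have hk'' : g ^ k = x := hk
      rw [hk''] at h4
      exact h4.symm.eq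
  -- the centralizer algebra
  letI instCR : CommRing ↥(Algebra.adjoin (ZMod t) {M}) :=
    Algebra.adjoinCommRingOfComm (ZMod t) (by
      intro x hx y hy
      rw [Set.mem_singleton_iff] at hx hy
      subst hx; subst hy; rfl)
  have hfield : IsField ↥(Algebra.adjoin (ZMod t) {M}) := by
    refine ⟨⟨0, 1, fun h => ?_⟩, mul_comm, ?_⟩
    · have := congrArg Subtype.val h
      exact zero_ne_one (α := Matrix (Fin a) (Fin a) (ZMod t)) this
    · intro e he
      obtain ⟨N', hN', h1, h2⟩ := E_inv M hirr e.2 (fun h0 => he (Subtype.ext h0))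
      exact ⟨⟨N', hN'⟩, Subtype.ext h1⟩
  letI instF : Field ↥(Algebra.adjoin (ZMod t) {M}) := hfield.toField
  -- the group isomorphism
  have hMmem : M ∈ Algebra.adjoin (ZMod t) {M} := Algebra.self_mem_adjoin_singleton (ZMod t) M
  set Z := Subgroup.centralizer (X : Set (Matrix.GeneralLinearGroup (Fin a) (ZMod t))) with hZ
  have hcmem : ∀ c : ↥Z, ((c : Matrix.GeneralLinearGroup (Fin a) (ZMod t)) :
      Matrix (Fin a) (Fin a) (ZMod t)) ∈ Algebra.adjoin (ZMod t) {M} :=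
    fun c => E_commutant M (by omega) hirr hdeg ((hmemZ _).mp c.2)
  have hcinvmem : ∀ c : ↥Z, (((c : Matrix.GeneralLinearGroup (Fin a) (ZMod t))⁻¹ :
      Matrix.GeneralLinearGroup (Fin a) (ZMod t)) :
      Matrix (Fin a) (Fin a) (ZMod t)) ∈ Algebra.adjoin (ZMod t) {M} :=
    fun c => E_commutant M (by omega) hirr hdeg ((hmemZ _).mp (Z.inv_mem c.2))
  set Φ : ↥Z ≃* (↥(Algebra.adjoin (ZMod t) {M}))ˣ :=
    { toFun := fun c =>
        { val := ⟨_, hcmem c⟩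
          inv := ⟨_, hcinvmem c⟩
          val_inv := Subtype.ext (Units.mul_inv _)
          inv_val := Subtype.ext (Units.inv_mul _) }
      invFun := fun u =>
        ⟨{ val := (u.val : Matrix (Fin a) (Fin a) (ZMod t))
           inv := ((u⁻¹).val : Matrix (Fin a) (Fin a) (ZMod t))
           val_inv := by
             show ((u.val * u⁻¹.val : ↥(Algebra.adjoin (ZMod t) {M})) :
               Matrix (Fin a) (Fin a) (ZMod t)) = 1
             rw [u.mul_inv]
             rfl
           inv_val := by
             show ((u⁻¹.val * u.val : ↥(Algebra.adjoin (ZMod t) {M})) :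
               Matrix (Fin a) (Fin a) (ZMod t)) = 1
             rw [u.inv_mul]
             rfl }, by
          rw [hZ, hmemZ]
          exact E_comm M u.val.2 hMmem⟩
      left_inv := fun c => Subtype.ext (Units.ext rfl)
      right_inv := fun u => Units.ext (Subtype.ext rfl)
      map_mul' := fun c d => Units.ext (Subtype.ext rfl) }
  constructor
  · exact isCyclic_of_surjective Φ.symm.toMonoidHom Φ.symm.surjective
  · rw [Nat.card_congr Φ.toEquiv, Nat.card_units, E_card M (by omega) hdeg]
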